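/- Let (Ω, ℱ, P) be a probability space, 𝒢 ⊆ ℱ a sub-σ-algebra, K ≥ 1, and X₁, …, X_K : Ω → ℝⁿ square-integrable random vectors such that almost everywhere: (i) E[X_k | 𝒢] = E[X₁ | 𝒢] for all k; (ii) E[‖X_k‖² | 𝒢] = E[‖X₁‖² | 𝒢] for all k; (iii) E[⟨X_j, X_k⟩ | 𝒢] = ‖E[X₁ | 𝒢]‖² for all j ≠ k (conditional uncorrelatedness given 𝒢). Let X̄ = (1/K) Σ_{k=1}^K X_k and m = E[X₁]. Then E[‖X̄ − m‖²] = (1/K)·E[ E[‖X₁‖² | 𝒢] − ‖E[X₁ | 𝒢]‖² ] + E[‖E[X₁ | 𝒢] − m‖²]. (This is the single-minibatch case B = 1 of Proposition 3: the trace variance of the K-sample Gumbel-Rao Monte Carlo estimator equals the expected conditional trace variance divided by K plus the trace variance of the fully Rao-Blackwellized estimator.) -/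

import Mathlib

open MeasureTheory
open scoped RealInnerProductSpace

section Aux

variable {Ω : Type*} {m m0 : MeasurableSpace Ω} {μ : Measure Ω} {n : ℕ}

theorem my_memℒp_condexp (hm : m ≤ m0) {μ : Measure Ω} [IsFiniteMeasure μ]
    (f : Ω → EuclideanSpace ℝ (Fin n)) (hf : MemLp f 2 μ) : MemLp (μ[f|m]) 2 μ := by
  have h : (condExpL2 (EuclideanSpace ℝ (Fin n)) ℝ hm (hf.toLp f) : Ω → EuclideanSpace ℝ (Fin n))
      =ᵐ[μ] μ[f|m] := by
    refine ae_eq_condExp_of_forall_setIntegral_eq hm (hf.integrable one_le_two)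
      (fun s _ _ => ?_) (fun s hs hμs => ?_) ?_
    · exact ((Lp.memLp _).integrable one_le_two).integrableOn
    · rw [integral_condExpL2_eq hm (hf.toLp f) hs hμs.ne]
      exact setIntegral_congr_ae (hm s hs) (hf.coeFn_toLp.mono fun x hx _ => hx)
    · exact aestronglyMeasurable_condExpL2 hm _
  exact (Lp.memLp _).ae_eq h

theorem my_integrable_inner {f g : Ω → EuclideanSpace ℝ (Fin n)}
    (hf : MemLp f 2 μ) (hg : MemLp g 2 μ) :
    Integrable (fun ω => ⟪f ω, g ω⟫) μ := by
  refine (L2.integrable_inner (𝕜 := ℝ) (hf.toLp f) (hg.toLp g)).congr ?_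
  filter_upwards [hf.coeFn_toLp, hg.coeFn_toLp] with ω h1 h2
  rw [h1, h2]

theorem my_integrable_normsq {f : Ω → EuclideanSpace ℝ (Fin n)} (hf : MemLp f 2 μ) :
    Integrable (fun ω => ‖f ω‖ ^ 2) μ :=
  (my_integrable_inner hf hf).congr
    (Filter.Eventually.of_forall fun ω => real_inner_self_eq_norm_sq _)

theorem my_var_expand [IsProbabilityMeasure μ] {f : Ω → EuclideanSpace ℝ (Fin n)}
    (hf : MemLp f 2 μ) (c : EuclideanSpace ℝ (Fin n)) :
    ∫ ω, ‖f ω - c‖ ^ 2 ∂μ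
      = ∫ ω, ‖f ω‖ ^ 2 ∂μ - 2 * ⟪∫ ω, f ω ∂μ, c⟫ + ‖c‖ ^ 2 := by
  have hfi : Integrable f μ := hf.integrable one_le_two
  have h1 := my_integrable_normsq hf
  have h2 : Integrable (fun ω => ⟪f ω, c⟫) μ := hfi.inner_const c
  calc ∫ ω, ‖f ω - c‖ ^ 2 ∂μ
      = ∫ ω, (‖f ω‖ ^ 2 - 2 * ⟪f ω, c⟫ + ‖c‖ ^ 2) ∂μ := by
        congr 1; ext ω; exact norm_sub_sq_real _ _
    _ = ∫ ω, (‖f ω‖ ^ 2 - 2 * ⟪f ω, c⟫) ∂μ + ∫ _ω, ‖c‖ ^ 2 ∂μ :=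
        integral_add (h1.sub (h2.const_mul 2)) (integrable_const _)
    _ = ∫ ω, ‖f ω‖ ^ 2 ∂μ - 2 * ∫ ω, ⟪f ω, c⟫ ∂μ + ‖c‖ ^ 2 := by
        rw [integral_sub h1 (h2.const_mul 2), integral_const_mul, integral_const]
        simp
    _ = _ := by
        have h := (innerSL ℝ c).integral_comp_comm hfi
        simp only [innerSL_apply_apply] at h
        rw [show ∫ ω, ⟪f ω, c⟫ ∂μ = ⟪∫ ω, f ω ∂μ, c⟫ from
          calc ∫ ω, ⟪f ω, c⟫ ∂μ = ∫ ω, ⟪c, f ω⟫ ∂μ := by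
                congr 1; ext ω; exact real_inner_comm _ _
            _ = ⟪c, ∫ ω, f ω ∂μ⟫ := h
            _ = ⟪∫ ω, f ω ∂μ, c⟫ := real_inner_comm _ _]

end Aux

/-- **Proposition 3, single-minibatch case (B = 1).** If `X₁, …, X_K` are square-integrable
random vectors that, conditionally on a sub-σ-algebra `𝒢`, share a common conditional mean and
conditional second moment and are pairwise conditionally uncorrelated, then the trace variance
of their average decomposes as (expected conditional trace variance)/K plus the trace variance
of the conditional mean:
`E[‖X̄ − m‖²] = (1/K)·E[E[‖X₁‖²|𝒢] − ‖E[X₁|𝒢]‖²] + E[‖E[X₁|𝒢] − m‖²]`. -/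
theorem average_var_decomposition {Ω : Type*} {ℱ : MeasurableSpace Ω} (μ : Measure Ω)
    [IsProbabilityMeasure μ] (𝒢 : MeasurableSpace Ω) (h𝒢 : 𝒢 ≤ ℱ)
    (n K : ℕ) (hK : 1 ≤ K)
    (X : Fin K → Ω → EuclideanSpace ℝ (Fin n))
    (hX : ∀ k, MemLp (X k) 2 μ)
    (hmean : ∀ k, (μ[X k|𝒢]) =ᵐ[μ] (μ[X ⟨0, hK⟩|𝒢]))
    (hsecond : ∀ k,
      (μ[fun ω => ‖X k ω‖ ^ 2|𝒢]) =ᵐ[μ] (μ[fun ω => ‖X ⟨0, hK⟩ ω‖ ^ 2|𝒢]))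
    (huncorr : ∀ j k, j ≠ k →
      (μ[fun ω => ⟪X j ω, X k ω⟫|𝒢]) =ᵐ[μ] fun ω => ‖(μ[X ⟨0, hK⟩|𝒢]) ω‖ ^ 2) :
    ∫ ω, ‖(K : ℝ)⁻¹ • ∑ k, X k ω - ∫ ω', X ⟨0, hK⟩ ω' ∂μ‖ ^ 2 ∂μ
      = (K : ℝ)⁻¹ *
          ∫ ω, ((μ[fun ω' => ‖X ⟨0, hK⟩ ω'‖ ^ 2|𝒢]) ω - ‖(μ[X ⟨0, hK⟩|𝒢]) ω‖ ^ 2) ∂μ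
        + ∫ ω, ‖(μ[X ⟨0, hK⟩|𝒢]) ω - ∫ ω', X ⟨0, hK⟩ ω' ∂μ‖ ^ 2 ∂μ := by
  have hK0 : (K : ℝ) ≠ 0 := by positivity
  set X0 : Ω → EuclideanSpace ℝ (Fin n) := X ⟨0, hK⟩ with hX0def
  set Y : Ω → EuclideanSpace ℝ (Fin n) := μ[X0|𝒢] with hYdef
  set m : EuclideanSpace ℝ (Fin n) := ∫ ω', X0 ω' ∂μ with hmdef
  have hY2 : MemLp Y 2 μ := my_memℒp_condexp h𝒢 X0 (hX _)
  have hYnsq : Integrable (fun ω => ‖Y ω‖ ^ 2) μ := my_integrable_normsq hY2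
  have hCE : Integrable (μ[fun ω' => ‖X0 ω'‖ ^ 2|𝒢]) μ := integrable_condExp
  set A : ℝ := ∫ ω, (μ[fun ω' => ‖X0 ω'‖ ^ 2|𝒢]) ω ∂μ with hAdef
  set B : ℝ := ∫ ω, ‖Y ω‖ ^ 2 ∂μ with hBdef
  -- integrals of the X k
  have hintX : ∀ k, ∫ ω, X k ω ∂μ = m := by
    intro k
    calc ∫ ω, X k ω ∂μ = ∫ ω, (μ[X k|𝒢]) ω ∂μ := (integral_condExp h𝒢).symm
      _ = ∫ ω, (μ[X0|𝒢]) ω ∂μ := integral_congr_ae (hmean k)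
      _ = m := integral_condExp h𝒢
  have hintY : ∫ ω, Y ω ∂μ = m := integral_condExp h𝒢
  -- the average is in L2
  have hXbar : MemLp (fun ω => (K : ℝ)⁻¹ • ∑ k, X k ω) 2 μ :=
    (memLp_finsetSum Finset.univ (fun k _ => hX k)).const_smul ((K : ℝ)⁻¹)
  have hintXbar : ∫ ω, (K : ℝ)⁻¹ • ∑ k, X k ω ∂μ = m := by
    rw [integral_smul, integral_finset_sum _ (fun k _ => (hX k).integrable one_le_two)]
    simp only [hintX, Finset.sum_const, Finset.card_univ, Fintype.card_fin]
    rw [← Nat.cast_smul_eq_nsmul ℝ, smul_smul, inv_mul_cancel₀ hK0, one_smul]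
  -- pairwise inner-product integrals
  have hinner : ∀ j k : Fin K, Integrable (fun ω => ⟪X j ω, X k ω⟫) μ :=
    fun j k => my_integrable_inner (hX j) (hX k)
  have hIeq : ∀ j k : Fin K,
      ∫ ω, ⟪X j ω, X k ω⟫ ∂μ = B + (if j = k then A - B else 0) := by
    intro j k
    by_cases hjk : j = k
    · subst hjk
      have : ∫ ω, ⟪X j ω, X j ω⟫ ∂μ = A := by
        calc ∫ ω, ⟪X j ω, X j ω⟫ ∂μ = ∫ ω, ‖X j ω‖ ^ 2 ∂μ := by
              congr 1; ext ω; exact real_inner_self_eq_norm_sq _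
          _ = ∫ ω, (μ[fun ω' => ‖X j ω'‖ ^ 2|𝒢]) ω ∂μ := (integral_condExp h𝒢).symm
          _ = ∫ ω, (μ[fun ω' => ‖X0 ω'‖ ^ 2|𝒢]) ω ∂μ := integral_congr_ae (hsecond j)
          _ = A := rfl
      rw [this, if_pos rfl]; ring
    · simp only [if_neg hjk, add_zero]
      calc ∫ ω, ⟪X j ω, X k ω⟫ ∂μ
          = ∫ ω, (μ[fun ω' => ⟪X j ω', X k ω'⟫|𝒢]) ω ∂μ := (integral_condExp h𝒢).symm
        _ = ∫ ω, ‖Y ω‖ ^ 2 ∂μ := integral_congr_ae (huncorr j k hjk)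
        _ = B := rfl
  -- second moment of the average
  have hXbarsq : ∫ ω, ‖(K : ℝ)⁻¹ • ∑ k, X k ω‖ ^ 2 ∂μ
      = (K : ℝ)⁻¹ ^ 2 * ((K : ℝ) * (K : ℝ) * B + (K : ℝ) * (A - B)) := by
    have hpt : ∀ ω, ‖(K : ℝ)⁻¹ • ∑ k, X k ω‖ ^ 2
        = (K : ℝ)⁻¹ ^ 2 * ∑ j, ∑ k, ⟪X j ω, X k ω⟫ := by
      intro ω
      have h1 : ‖∑ k, X k ω‖ ^ 2 = ∑ j, ∑ k, ⟪X j ω, X k ω⟫ := by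
        rw [← real_inner_self_eq_norm_sq, sum_inner]
        exact Finset.sum_congr rfl fun j _ => inner_sum _ _ _
      rw [norm_smul, mul_pow, h1, Real.norm_eq_abs, abs_of_nonneg (by positivity)]
    calc ∫ ω, ‖(K : ℝ)⁻¹ • ∑ k, X k ω‖ ^ 2 ∂μ
        = ∫ ω, (K : ℝ)⁻¹ ^ 2 * ∑ j, ∑ k, ⟪X j ω, X k ω⟫ ∂μ := by
          congr 1; ext ω; exact hpt ω
      _ = (K : ℝ)⁻¹ ^ 2 * ∫ ω, ∑ j, ∑ k, ⟪X j ω, X k ω⟫ ∂μ := integral_const_mul _ _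
      _ = (K : ℝ)⁻¹ ^ 2 * ∑ j, ∑ k, ∫ ω, ⟪X j ω, X k ω⟫ ∂μ := by
          rw [integral_finset_sum _ (fun j _ => integrable_finset_sum _ (fun k _ => hinner j k))]
          congr 1
          exact Finset.sum_congr rfl fun j _ => integral_finset_sum _ (fun k _ => hinner j k)
      _ = (K : ℝ)⁻¹ ^ 2 * ((K : ℝ) * (K : ℝ) * B + (K : ℝ) * (A - B)) := by
          simp only [hIeq, Finset.sum_add_distrib, Finset.sum_ite_eq, Finset.mem_univ,
            if_pos, Finset.sum_const, Finset.card_univ, Fintype.card_fin, nsmul_eq_mul]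
          ring
  -- put everything together
  have hL := my_var_expand hXbar m
  rw [hintXbar, hXbarsq] at hL
  have hR2 := my_var_expand hY2 m
  rw [hintY] at hR2
  have hR1 : ∫ ω, ((μ[fun ω' => ‖X0 ω'‖ ^ 2|𝒢]) ω - ‖Y ω‖ ^ 2) ∂μ = A - B :=
    integral_sub hCE hYnsq
  rw [hL, hR1, hR2, hBdef]
  field_simp
  ring
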